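/- For every nonzero real z with |z| < π, Σ_{n≥1} ( ∫_{-1}^{1} T_{2n-1}(x) dx ) · z^{2n-1}/(2n-1)! = 4 · Σ_{n≥1} n · (2^{2n} B_{2n}/(2n)!) · z^{2n-1}, where T_n are the polynomials defined by T_0(x) = x and T_n(x) = (1 - x²)·T_{n-1}'(x); consequently ∫_{-1}^{1} T_{2n-1}(x) dx = 2^{2n+1} B_{2n} for every n ≥ 1. -/

import Mathlib

open Polynomial Real MeasureTheory

noncomputable def T : ℕ → Polynomial ℚ
  | 0 => Polynomial.X
  | n + 1 => (1 - Polynomial.X ^ 2) * Polynomial.derivative (T n)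

namespace TProof

/-- value of ∫_{-1}^1 x^k dx as a rational -/
noncomputable def mval (k : ℕ) : ℚ := (1 - (-1 : ℚ) ^ (k + 1)) / (k + 1)

/-- the linear functional P ↦ ∫_{-1}^1 P -/
noncomputable def Lq (p : Polynomial ℚ) : ℚ := p.sum fun k a => a * mval k

lemma Lq_add (p q : Polynomial ℚ) : Lq (p + q) = Lq p + Lq q := by
  unfold Lq
  rw [Polynomial.sum_add_index] <;> intros <;> ring

lemma Lq_zero : Lq 0 = 0 := by simp [Lq]

lemma Lq_monomial (k : ℕ) (a : ℚ) : Lq (Polynomial.monomial k a) = a * mval k := by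
  unfold Lq
  rw [Polynomial.sum_monomial_index]
  ring

lemma Lq_smul (c : ℚ) (p : Polynomial ℚ) : Lq (c • p) = c * Lq p := by
  induction p using Polynomial.induction_on' with
  | add p q hp hq => rw [smul_add, Lq_add, Lq_add, hp, hq]; ring
  | monomial n a => rw [smul_monomial, Lq_monomial, Lq_monomial, smul_eq_mul]; ring

lemma Lq_C_mul (c : ℚ) (p : Polynomial ℚ) : Lq (Polynomial.C c * p) = c * Lq p := by
  rw [← smul_eq_C_mul, Lq_smul]

lemma Lq_one : Lq 1 = 2 := by
  have : (1 : Polynomial ℚ) = Polynomial.monomial 0 1 := by simp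
  rw [this, Lq_monomial, mval]; norm_num

lemma Lq_X : Lq Polynomial.X = 0 := by
  have : (Polynomial.X : Polynomial ℚ) = Polynomial.monomial 1 1 := (Polynomial.monomial_one_one_eq_X).symm
  rw [this, Lq_monomial, mval]; norm_num

lemma Lq_derivative (p : Polynomial ℚ) :
    Lq (Polynomial.derivative p) = p.eval 1 - p.eval (-1) := by
  induction p using Polynomial.induction_on' with
  | add p q hp hq => rw [map_add, Lq_add, hp, hq]; simp; ring
  | monomial n a =>
      rw [Polynomial.derivative_monomial]
      rcases n with _ | m
      · simp [Lq_zero]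
      · rw [Lq_monomial, mval]
        simp only [Nat.add_sub_cancel, Polynomial.eval_monomial]
        push_cast
        have hm : (m : ℚ) + 1 ≠ 0 := by positivity
        field_simp
        ring

lemma integral_eq_Lq (p : Polynomial ℚ) :
    ∫ x in (-1 : ℝ)..1, (Polynomial.aeval x p : ℝ) = (Lq p : ℚ) := by
  induction p using Polynomial.induction_on' with
  | add p q hp hq =>
      simp only [map_add]
      rw [intervalIntegral.integral_add, hp, hq, Lq_add]
      · push_cast; ring
      · exact (Polynomial.continuous_aeval p).intervalIntegrable _ _
      · exact (Polynomial.continuous_aeval q).intervalIntegrable _ _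
  | monomial n a =>
      simp only [Polynomial.aeval_monomial, Algebra.algebraMap_self]
      have : ∫ x in (-1 : ℝ)..1, (algebraMap ℚ ℝ a) * x ^ n
          = (a : ℝ) * ∫ x in (-1 : ℝ)..1, x ^ n := by
        rw [intervalIntegral.integral_const_mul]; norm_num
      rw [this, integral_pow, Lq_monomial, mval]
      push_cast
      ring

end TProof
namespace TProof

abbrev PS := PowerSeries (Polynomial ℚ)
abbrev QS := PowerSeries ℚ

noncomputable def DA : PS → PS := fun f => PowerSeries.derivativeFun f
noncomputable def DQ : QS → QS := fun f => PowerSeries.derivativeFun f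

lemma coeff_DA (S : PS) (n : ℕ) :
    PowerSeries.coeff n (DA S) = PowerSeries.coeff (n+1) S * (n+1) :=
  PowerSeries.coeff_derivativeFun S n

lemma coeff_DQ (S : QS) (n : ℕ) :
    PowerSeries.coeff n (DQ S) = PowerSeries.coeff (n+1) S * (n+1) :=
  PowerSeries.coeff_derivativeFun S n

lemma DA_add (S T : PS) : DA (S + T) = DA S + DA T := PowerSeries.derivativeFun_add S T
lemma DA_mul (S T : PS) : DA (S * T) = S * DA T + T * DA S := by
  simpa [smul_eq_mul, DA] using PowerSeries.derivativeFun_mul S T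
lemma DQ_add (S T : QS) : DQ (S + T) = DQ S + DQ T := PowerSeries.derivativeFun_add S T
lemma DQ_mul (S T : QS) : DQ (S * T) = S * DQ T + T * DQ S := by
  simpa [smul_eq_mul, DQ] using PowerSeries.derivativeFun_mul S T
lemma DA_C (p : Polynomial ℚ) : DA (PowerSeries.C p) = 0 := PowerSeries.derivative_C
lemma DA_one : DA 1 = 0 := PowerSeries.derivativeFun_one
lemma DQ_C (c : ℚ) : DQ (PowerSeries.C c) = 0 := PowerSeries.derivative_C
lemma DQ_one : DQ 1 = 0 := PowerSeries.derivativeFun_one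
lemma DQ_X : DQ PowerSeries.X = 1 := by
  ext n
  rw [coeff_DQ]
  simp [PowerSeries.coeff_X, PowerSeries.coeff_one]
  rcases n with _ | n <;> simp

/-- coefficientwise polynomial derivative (∂/∂x) -/
noncomputable def Dx (S : PS) : PS :=
  PowerSeries.mk fun n => Polynomial.derivative (PowerSeries.coeff n S)

@[simp] lemma coeff_Dx (S : PS) (n : ℕ) :
    PowerSeries.coeff n (Dx S) = Polynomial.derivative (PowerSeries.coeff n S) :=
  PowerSeries.coeff_mk _ _

lemma Dx_add (S T : PS) : Dx (S + T) = Dx S + Dx T := by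
  ext n; simp

lemma Dx_mul (S T : PS) : Dx (S * T) = Dx S * T + S * Dx T := by
  refine PowerSeries.ext fun n => ?_
  simp only [coeff_Dx, PowerSeries.coeff_mul, map_add]
  have : Polynomial.derivative (∑ ij ∈ Finset.HasAntidiagonal.antidiagonal n,
      PowerSeries.coeff ij.1 S * PowerSeries.coeff ij.2 T)
      = ∑ ij ∈ Finset.HasAntidiagonal.antidiagonal n,
        Polynomial.derivative (PowerSeries.coeff ij.1 S * PowerSeries.coeff ij.2 T) :=
    Polynomial.derivative_sum
  rw [this]
  rw [show (∑ ij ∈ Finset.HasAntidiagonal.antidiagonal n,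
        Polynomial.derivative (PowerSeries.coeff ij.1 S) * PowerSeries.coeff ij.2 T)
      + (∑ ij ∈ Finset.HasAntidiagonal.antidiagonal n,
        PowerSeries.coeff ij.1 S * Polynomial.derivative (PowerSeries.coeff ij.2 T))
      = ∑ ij ∈ Finset.HasAntidiagonal.antidiagonal n,
        (Polynomial.derivative (PowerSeries.coeff ij.1 S) * PowerSeries.coeff ij.2 T
          + PowerSeries.coeff ij.1 S * Polynomial.derivative (PowerSeries.coeff ij.2 T))
      from (Finset.sum_add_distrib).symm]
  exact Finset.sum_congr rfl fun ij _ => by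
    rw [Polynomial.derivative_mul]

lemma Dx_C (p : Polynomial ℚ) : Dx (PowerSeries.C p) = PowerSeries.C (Polynomial.derivative p) := by
  ext n
  rcases n with _ | n <;> simp [PowerSeries.coeff_C]

lemma Dx_one : Dx (1 : PS) = 0 := by
  have := Dx_C 1; simpa using this

lemma Dx_mapC (b : QS) : Dx (PowerSeries.map (Polynomial.C : ℚ →+* Polynomial ℚ) b) = 0 := by
  ext n; simp

lemma Dx_DA (S : PS) : Dx (DA S) = DA (Dx S) := by
  ext n
  simp [coeff_DA, Polynomial.derivative_mul, Polynomial.derivative_natCast]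

/-- evaluation maps -/
noncomputable def ev (c : ℚ) : PS →+* QS := PowerSeries.map (Polynomial.evalRingHom c)

@[simp] lemma coeff_ev (c : ℚ) (S : PS) (n : ℕ) :
    PowerSeries.coeff n (ev c S) = (PowerSeries.coeff n S).eval c :=
  PowerSeries.coeff_map _ _ _

lemma ev_DA (c : ℚ) (S : PS) : ev c (DA S) = DQ (ev c S) := by
  ext n; simp [coeff_DA, coeff_DQ]

lemma ev_mapC (c : ℚ) (b : QS) : ev c (PowerSeries.map (Polynomial.C : ℚ →+* Polynomial ℚ) b) = b := by
  ext n; simp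

lemma DA_mapC (b : QS) :
    DA (PowerSeries.map (Polynomial.C : ℚ →+* Polynomial ℚ) b)
      = PowerSeries.map (Polynomial.C : ℚ →+* Polynomial ℚ) (DQ b) := by
  ext n
  simp [coeff_DA, coeff_DQ, Polynomial.C_eq_natCast]

/-- uniqueness for linear ODE y' = A y, y(0)=0 -/
lemma lin_ode_unique {R : Type*} [CommRing R] [IsDomain R] [CharZero R]
    (A₀ H : PowerSeries R)
    (hH : PowerSeries.derivativeFun H = A₀ * H)
    (h0 : PowerSeries.constantCoeff H = 0) : H = 0 := by
  have key : ∀ n, PowerSeries.coeff n H = 0 := by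
    intro n
    induction n using Nat.strong_induction_on with
    | _ n IH =>
      rcases n with _ | n
      · simpa [PowerSeries.coeff_zero_eq_constantCoeff] using h0
      · have h1 := congrArg (PowerSeries.coeff n) hH
        rw [show PowerSeries.coeff n (PowerSeries.derivativeFun H) = PowerSeries.coeff (n+1) H * (n+1) from PowerSeries.coeff_derivative H n, PowerSeries.coeff_mul] at h1
        have h2 : ∀ ij ∈ Finset.HasAntidiagonal.antidiagonal n,
            PowerSeries.coeff ij.1 A₀ * PowerSeries.coeff ij.2 H = 0 := by
          intro ij hij
          have : ij.2 ≤ n := Finset.HasAntidiagonal.antidiagonal.snd_le hij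
          rw [IH ij.2 (Nat.lt_succ_of_le this), mul_zero]
        rw [Finset.sum_eq_zero h2] at h1
        have hne : ((n : R) + 1) ≠ 0 := by
          have : ((n+1 : ℕ) : R) ≠ 0 := Nat.cast_ne_zero.mpr (Nat.succ_ne_zero n)
          simpa [Nat.cast_add] using this
        rcases mul_eq_zero.mp h1 with h | h
        · exact h
        · exact absurd h hne

  ext n
  simp [key n]

/-- uniqueness for the transport PDE -/
lemma pde_unique (K : PS)
    (hK : DA K = PowerSeries.C (1 - Polynomial.X ^ 2) * Dx K)
    (h0 : PowerSeries.constantCoeff K = 0) : K = 0 := by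
  have key : ∀ n, PowerSeries.coeff n K = 0 := by
    intro n
    induction n using Nat.strong_induction_on with
    | _ n IH =>
      rcases n with _ | n
      · simpa [PowerSeries.coeff_zero_eq_constantCoeff] using h0
      · have h1 := congrArg (PowerSeries.coeff n) hK
        rw [coeff_DA, PowerSeries.coeff_C_mul, coeff_Dx, IH n (Nat.lt_succ_self n)] at h1
        simp only [map_zero, mul_zero] at h1
        have hne : ((n : Polynomial ℚ) + 1) ≠ 0 := by
          have : ((n+1 : ℕ) : Polynomial ℚ) ≠ 0 := Nat.cast_ne_zero.mpr (Nat.succ_ne_zero n)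
          simpa [Nat.cast_add] using this
        rcases mul_eq_zero.mp h1 with h | h
        · exact h
        · exact absurd h hne
  ext n
  simp [key n]

end TProof
-- stage 3 (appended to s2 content when testing)
namespace TProof

noncomputable def mC : QS →+* PS := PowerSeries.map (Polynomial.C : ℚ →+* Polynomial ℚ)

noncomputable def F : PS := PowerSeries.mk fun n => Polynomial.C ((n.factorial : ℚ))⁻¹ * T n

lemma coeff_F (n : ℕ) :
    PowerSeries.coeff n F = Polynomial.C ((n.factorial : ℚ))⁻¹ * T n :=
  PowerSeries.coeff_mk _ _

lemma DA_sub (S T : PS) : DA (S - T) = DA S - DA T := by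
  refine PowerSeries.ext fun n => ?_
  simp [coeff_DA, sub_mul]

lemma DQ_sub (S T : QS) : DQ (S - T) = DQ S - DQ T := by
  refine PowerSeries.ext fun n => ?_
  simp [coeff_DQ, sub_mul]

lemma Dx_sub (S T : PS) : Dx (S - T) = Dx S - Dx T := by
  refine PowerSeries.ext fun n => ?_
  simp

lemma F_pde : DA F = PowerSeries.C (1 - Polynomial.X ^ 2) * Dx F := by
  refine PowerSeries.ext fun n => ?_
  rw [coeff_DA, PowerSeries.coeff_C_mul, coeff_Dx, coeff_F, coeff_F]
  rw [show T (n+1) = (1 - Polynomial.X ^ 2) * Polynomial.derivative (T n) from rfl]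
  rw [Polynomial.derivative_C_mul]
  rw [show ((n : Polynomial ℚ) + 1) = Polynomial.C ((n : ℚ) + 1) by simp [map_add, map_one, map_natCast]]
  have hs : ((n.factorial : ℚ))⁻¹ = (((n+1).factorial : ℚ))⁻¹ * ((n : ℚ) + 1) := by
    rw [Nat.factorial_succ]
    have h1 : ((n.factorial : ℚ)) ≠ 0 := Nat.cast_ne_zero.mpr n.factorial_ne_zero
    have h2 : ((n : ℚ) + 1) ≠ 0 := by positivity
    push_cast
    field_simp
  rw [hs, map_mul]
  ring

lemma F_const : PowerSeries.constantCoeff F = Polynomial.X := by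
  rw [← PowerSeries.coeff_zero_eq_constantCoeff_apply, coeff_F]
  simp [T]

lemma F_ode : DA F = 1 - F ^ 2 := by
  have hF := F_pde
  set K := DA F - (1 - F ^ 2) with hKdef
  have e1 : DA (DA F) = PowerSeries.C (1 - Polynomial.X ^ 2) * DA (Dx F) := by
    conv_lhs => rw [hF]
    rw [DA_mul, DA_C, mul_zero, add_zero]
  have e2 : Dx (DA F) = DA (Dx F) := Dx_DA F
  have hK : DA K = PowerSeries.C (1 - Polynomial.X ^ 2) * Dx K := by
    rw [hKdef, DA_sub, DA_sub, DA_one, sq, DA_mul, e1,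
      Dx_sub, Dx_sub, Dx_one, Dx_mul, e2, hF]
    ring
  have h0 : PowerSeries.constantCoeff K = 0 := by
    rw [hKdef, map_sub, map_sub, map_one, map_pow, F_const]
    have : PowerSeries.constantCoeff (DA F) = 1 - Polynomial.X ^ 2 := by
      rw [← PowerSeries.coeff_zero_eq_constantCoeff_apply, coeff_DA, coeff_F]
      simp [T]
    rw [this]
    ring
  exact sub_eq_zero.mp (pde_unique K hK h0)
  
end TProof
namespace TProof

noncomputable def tau : QS := ev 0 F

lemma tau_ode : DQ tau = 1 - tau ^ 2 := by
  have h := congrArg (ev 0) F_ode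
  rw [ev_DA] at h
  rw [tau, h, map_sub, map_one, map_pow]

lemma tau_const : PowerSeries.constantCoeff tau = 0 := by
  rw [tau, ← PowerSeries.coeff_zero_eq_constantCoeff_apply, coeff_ev, coeff_F]
  simp [T]

lemma tau_c1 : PowerSeries.coeff 1 tau = 1 := by
  rw [tau, coeff_ev, coeff_F]
  simp [T]

lemma tau_ne : tau ≠ 0 := by
  intro h
  have := tau_c1
  rw [h, map_zero] at this
  norm_num at this

noncomputable def tA : PS := mC tau

lemma ev_tA (c : ℚ) : ev c tA = tau := ev_mapC c tau

lemma Dx_tA : Dx tA = 0 := Dx_mapC tau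

lemma tA_ode : DA tA = 1 - tA ^ 2 := by
  rw [tA, mC, DA_mapC, tau_ode, map_sub, map_one, map_pow]

lemma constantCoeff_mC (b : QS) :
    PowerSeries.constantCoeff (mC b) = Polynomial.C (PowerSeries.constantCoeff b) := by
  rw [← PowerSeries.coeff_zero_eq_constantCoeff_apply, mC, PowerSeries.coeff_map]
  rw [PowerSeries.coeff_zero_eq_constantCoeff_apply]

lemma tA_const : PowerSeries.constantCoeff tA = 0 := by
  rw [tA, constantCoeff_mC, tau_const, map_zero]

noncomputable def Cx : PS := PowerSeries.C (Polynomial.X : Polynomial ℚ)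

lemma DA_Cx : DA Cx = 0 := DA_C _
lemma Dx_Cx : Dx Cx = 1 := by rw [Cx, Dx_C]; simp
lemma Cx_const : PowerSeries.constantCoeff Cx = Polynomial.X := PowerSeries.constantCoeff_C _
lemma ev_Cx (c : ℚ) : ev c Cx = PowerSeries.C c := by
  refine PowerSeries.ext fun n => ?_
  rw [coeff_ev, Cx, PowerSeries.coeff_C, PowerSeries.coeff_C]
  split_ifs <;> simp

lemma addF : F * (1 + Cx * tA) = Cx + tA := by
  have hH : Cx + tA - F * (1 + Cx * tA) = 0 := by
    apply lin_ode_unique (-(F + tA))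
    · show DA (Cx + tA - F * (1 + Cx * tA)) = -(F + tA) * (Cx + tA - F * (1 + Cx * tA))
      rw [DA_sub, DA_add, DA_Cx, DA_mul F (1 + Cx * tA), DA_add, DA_one,
        DA_mul Cx tA, DA_Cx, tA_ode, F_ode]
      ring
    · rw [map_sub, map_add, map_mul, map_add, map_mul, Cx_const, tA_const, F_const, map_one]
      ring
  linear_combination -hH

lemma DxF_rel : Dx F * (1 + Cx * tA) = 1 - tA * F := by
  have h := congrArg Dx addF
  rw [Dx_mul, Dx_add, Dx_one, Dx_mul, Dx_Cx, Dx_tA, Dx_add, Dx_Cx, Dx_tA] at h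
  linear_combination h

noncomputable def W : PS := tA * F - 1

lemma W_rel : W * (1 + Cx * tA) = tA ^ 2 - 1 := by
  rw [W]
  linear_combination tA * addF

lemma DxW : Dx W = tA * Dx F := by
  rw [W, Dx_sub, Dx_one, Dx_mul, Dx_tA]
  ring

lemma DxW_rel : Dx W * (1 + Cx * tA) = -(tA * W) := by
  rw [DxW, W]
  linear_combination tA * DxF_rel

lemma one_plus_ne : (1 + Cx * tA) ≠ 0 := by
  intro h
  have := congrArg (PowerSeries.constantCoeff (R := Polynomial ℚ)) h
  rw [map_add, map_one, map_mul, tA_const, mul_zero, add_zero, map_zero] at this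
  norm_num at this

lemma quad : (tA ^ 2 - 1) * Dx W = -(tA * W ^ 2) := by
  apply mul_right_cancel₀ (mul_ne_zero one_plus_ne one_plus_ne)
  have h1 : (tA ^ 2 - 1) * Dx W * ((1 + Cx * tA) * (1 + Cx * tA))
      = (tA ^ 2 - 1) * (-(tA * W)) * (1 + Cx * tA) := by
    linear_combination ((tA ^ 2 - 1) * (1 + Cx * tA)) * DxW_rel
  have h2 : -(tA * W ^ 2) * ((1 + Cx * tA) * (1 + Cx * tA))
      = -(tA * (tA ^ 2 - 1) * (tA ^ 2 - 1)) := by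
    linear_combination (-(tA * (W * (1 + Cx * tA) + (tA ^ 2 - 1)))) * W_rel
  have h3 : (tA ^ 2 - 1) * (-(tA * W)) * (1 + Cx * tA)
      = -(tA * (tA ^ 2 - 1) * (tA ^ 2 - 1)) := by
    linear_combination (-(tA * (tA ^ 2 - 1))) * W_rel
  rw [h1, h2, h3]

lemma one_plus_tau_ne : (1 + tau : QS) ≠ 0 := by
  intro h
  have := congrArg (PowerSeries.constantCoeff (R := ℚ)) h
  rw [map_add, map_one, tau_const, map_zero] at this
  norm_num at this

lemma one_sub_tau_ne : (1 - tau : QS) ≠ 0 := by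
  intro h
  have := congrArg (PowerSeries.constantCoeff (R := ℚ)) h
  rw [map_sub, map_one, tau_const, map_zero] at this
  norm_num at this

lemma ev1F : ev 1 F = 1 := by
  have h := congrArg (ev 1) addF
  rw [map_mul, map_add, map_add, map_one, map_mul, ev_Cx, ev_tA] at h
  have hC : (PowerSeries.C (1 : ℚ)) = 1 := map_one _
  rw [hC] at h
  apply mul_right_cancel₀ one_plus_tau_ne
  rw [one_mul]
  linear_combination h

lemma evm1F : ev (-1) F = -1 := by
  have h := congrArg (ev (-1)) addF
  rw [map_mul, map_add, map_add, map_one, map_mul, ev_Cx, ev_tA] at h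
  have hC : (PowerSeries.C (-1 : ℚ)) = -1 := by simp
  rw [hC] at h
  apply mul_right_cancel₀ one_sub_tau_ne
  linear_combination h

end TProof
namespace TProof

lemma Lq_sum {α : Type*} (s : Finset α) (f : α → Polynomial ℚ) :
    Lq (∑ i ∈ s, f i) = ∑ i ∈ s, Lq (f i) := by
  classical
  induction s using Finset.induction_on with
  | empty => simp [Lq_zero]
  | insert _ _ h ih => rw [Finset.sum_insert h, Finset.sum_insert h, Lq_add, ih]

noncomputable def Lmap : PS → QS := fun S =>
  PowerSeries.mk fun n => Lq (PowerSeries.coeff n S)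

@[simp] lemma coeff_Lmap (S : PS) (n : ℕ) :
    PowerSeries.coeff n (Lmap S) = Lq (PowerSeries.coeff n S) :=
  PowerSeries.coeff_mk _ _

lemma Lmap_add (S T : PS) : Lmap (S + T) = Lmap S + Lmap T := by
  refine PowerSeries.ext fun n => ?_
  simp [Lq_add]

lemma Lq_neg (p : Polynomial ℚ) : Lq (-p) = -Lq p := by
  have := Lq_smul (-1) p
  simpa using this

lemma Lmap_sub (S T : PS) : Lmap (S - T) = Lmap S - Lmap T := by
  refine PowerSeries.ext fun n => ?_
  simp only [coeff_Lmap, map_sub]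
  rw [sub_eq_add_neg, Lq_add, Lq_neg]
  ring

lemma Lmap_one : Lmap 1 = 2 := by
  refine PowerSeries.ext fun n => ?_
  rw [coeff_Lmap, PowerSeries.coeff_one]
  rw [show (2 : QS) = PowerSeries.C (2 : ℚ) from (map_ofNat _ 2).symm, PowerSeries.coeff_C]
  split_ifs with h
  · exact Lq_one
  · exact Lq_zero

lemma Lmap_mC_mul (b : QS) (S : PS) : Lmap (mC b * S) = b * Lmap S := by
  refine PowerSeries.ext fun n => ?_
  rw [coeff_Lmap, PowerSeries.coeff_mul, PowerSeries.coeff_mul, Lq_sum]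
  refine Finset.sum_congr rfl fun ij _ => ?_
  rw [mC, PowerSeries.coeff_map, Lq_C_mul, coeff_Lmap]

lemma Lmap_DA (S : PS) : Lmap (DA S) = DQ (Lmap S) := by
  refine PowerSeries.ext fun n => ?_
  rw [coeff_Lmap, coeff_DA, coeff_DQ, coeff_Lmap]
  rw [show ((n : Polynomial ℚ) + 1) = Polynomial.C ((n : ℚ) + 1) by
    simp [map_add, map_one, map_natCast]]
  rw [mul_comm, Lq_C_mul]
  ring

lemma Lmap_Dx (S : PS) : Lmap (Dx S) = ev 1 S - ev (-1) S := by
  refine PowerSeries.ext fun n => ?_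
  rw [coeff_Lmap, coeff_Dx, map_sub, coeff_ev, coeff_ev, Lq_derivative]

noncomputable def G : QS := Lmap F

lemma LmapW : Lmap W = tau * G - 2 := by
  rw [W, tA, Lmap_sub, Lmap_mC_mul, Lmap_one, G]

lemma ev1W : ev 1 W = tau - 1 := by
  rw [W, map_sub, map_mul, map_one, tA, show mC tau = tA from rfl, ev_tA, ev1F, mul_one]

lemma evm1W : ev (-1) W = -tau - 1 := by
  rw [W, map_sub, map_mul, map_one, tA, show mC tau = tA from rfl, ev_tA, evm1F]
  ring

lemma LmapDxW : Lmap (Dx W) = 2 * tau := by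
  rw [Lmap_Dx, ev1W, evm1W]
  ring

lemma LmapW2 : Lmap (W ^ 2) = 2 - 2 * tau ^ 2 := by
  have h := congrArg Lmap quad
  have e1 : (tA ^ 2 - 1) * Dx W = mC (tau ^ 2 - 1) * Dx W := by
    rw [map_sub, map_pow, map_one, tA]
  have e2 : -(tA * W ^ 2) = mC (-tau) * W ^ 2 := by
    rw [map_neg, tA]; ring
  rw [e1, e2, Lmap_mC_mul, Lmap_mC_mul, LmapDxW] at h
  have h2 : tau * (Lmap (W ^ 2) - (2 - 2 * tau ^ 2)) = 0 := by linear_combination h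
  rcases mul_eq_zero.mp h2 with h3 | h3
  · exact absurd h3 tau_ne
  · linear_combination h3

lemma LmapF2 : tau ^ 2 * Lmap (F ^ 2) = 2 * tau * G - 2 * tau ^ 2 := by
  have e : W ^ 2 = mC (tau ^ 2) * (F ^ 2) - mC (2 * tau) * F + 1 := by
    rw [W, tA, map_pow, map_mul, show mC (2 : QS) = 2 from map_ofNat _ 2]
    ring
  have h := congrArg Lmap e
  rw [LmapW2, Lmap_add, Lmap_sub, Lmap_mC_mul, Lmap_mC_mul, Lmap_one] at h
  have : Lmap F = G := rfl
  rw [this] at h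
  linear_combination -h

lemma G_ode : tau * DQ G + 2 * G = 4 * tau := by
  have h1 : DQ G = 2 - Lmap (F ^ 2) := by
    rw [G, ← Lmap_DA, F_ode, Lmap_sub, Lmap_one]
  have h2 : tau ^ 2 * DQ G = 2 * tau ^ 2 - (2 * tau * G - 2 * tau ^ 2) := by
    rw [h1, mul_sub, LmapF2]
    ring
  have h3 : tau * (tau * DQ G + 2 * G - 4 * tau) = 0 := by linear_combination h2
  rcases mul_eq_zero.mp h3 with h4 | h4
  · exact absurd h4 tau_ne
  · linear_combination h4

end TProof
namespace TProof

noncomputable def u : QS := PowerSeries.rescale (2 : ℚ) (PowerSeries.exp ℚ)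
noncomputable def b2 : QS := PowerSeries.rescale (2 : ℚ) (bernoulliPowerSeries ℚ)

lemma coeff_u (n : ℕ) : PowerSeries.coeff n u = 2 ^ n * ((n.factorial : ℚ))⁻¹ := by
  rw [u, PowerSeries.coeff_rescale, PowerSeries.coeff_exp]
  simp [one_div]

lemma coeff_b2 (n : ℕ) :
    PowerSeries.coeff n b2 = 2 ^ n * (_root_.bernoulli n / (n.factorial : ℚ)) := by
  rw [b2, PowerSeries.coeff_rescale, bernoulliPowerSeries, PowerSeries.coeff_mk]
  simp

lemma u_const : PowerSeries.constantCoeff u = 1 := by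
  rw [← PowerSeries.coeff_zero_eq_constantCoeff_apply, coeff_u]
  simp

lemma DQ_u : DQ u = 2 * u := by
  refine PowerSeries.ext fun n => ?_
  rw [coeff_DQ, coeff_u, show ((2 : QS)) = PowerSeries.C (2 : ℚ) from (map_ofNat _ 2).symm,
    PowerSeries.coeff_C_mul, coeff_u, Nat.factorial_succ]
  have h1 : ((n.factorial : ℚ)) ≠ 0 := Nat.cast_ne_zero.mpr n.factorial_ne_zero
  have h2 : ((n : ℚ) + 1) ≠ 0 := by positivity
  push_cast
  field_simp
  ring

lemma b2u : b2 * (u - 1) = 2 * PowerSeries.X := by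
  have h := congrArg (PowerSeries.rescale (2 : ℚ)) (bernoulliPowerSeries_mul_exp_sub_one ℚ)
  rw [map_mul, map_sub, map_one, PowerSeries.rescale_X] at h
  rw [b2, u, h, show (PowerSeries.C (2 : ℚ)) = 2 from map_ofNat _ 2]

lemma um1_ne : (u - 1 : QS) ≠ 0 := by
  intro h
  have := congrArg (PowerSeries.coeff 1) h
  rw [map_sub, coeff_u, PowerSeries.coeff_one] at this
  norm_num at this

lemma up1_ne : (u + 1 : QS) ≠ 0 := by
  intro h
  have := congrArg (PowerSeries.constantCoeff (R := ℚ)) h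
  rw [map_add, map_one, u_const] at this
  norm_num at this

lemma tau_u : tau * (u + 1) = u - 1 := by
  have hd : tau * (u + 1) - (u - 1) = 0 := by
    apply lin_ode_unique (1 - tau)
    · show DQ _ = _
      rw [DQ_sub, DQ_mul, DQ_add, DQ_one, DQ_u, DQ_sub, DQ_one, DQ_u, tau_ode]
      ring
    · rw [map_sub, map_mul, map_add, map_sub, map_one, tau_const, u_const]
      ring
  linear_combination hd

noncomputable def hb : QS := PowerSeries.X + b2

lemma hb_rel : hb * (u - 1) = PowerSeries.X * (u + 1) := by
  rw [hb]
  linear_combination b2u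

lemma DQ_two : DQ (2 : QS) = 0 := by
  rw [show ((2 : QS)) = PowerSeries.C (2 : ℚ) from (map_ofNat _ 2).symm, DQ_C]

lemma DQ_two_mul (S : QS) : DQ (2 * S) = 2 * DQ S := by
  rw [show ((2 : QS)) = PowerSeries.C (2 : ℚ) from (map_ofNat _ 2).symm, DQ_mul, DQ_C]
  ring

lemma rel_i : hb * (2 * u) + (u - 1) * DQ hb = PowerSeries.X * (2 * u) + (u + 1) := by
  have h := congrArg DQ hb_rel
  rw [DQ_mul, DQ_mul, DQ_sub, DQ_add, DQ_one, DQ_u, DQ_X] at h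
  linear_combination h

lemma rel_ii : (u - 1) * DQ (DQ hb) + 4 * u * DQ hb + 4 * u * hb
    = 4 * PowerSeries.X * u + 4 * u := by
  have h := congrArg DQ rel_i
  rw [DQ_add, DQ_add, DQ_mul, DQ_mul, DQ_mul, DQ_mul, DQ_two_mul, DQ_u, DQ_X,
    DQ_sub, DQ_one, DQ_u, DQ_add, DQ_one, DQ_u, DQ_two] at h
  linear_combination h

noncomputable def Rs : QS := 2 * DQ hb

lemma R_ode : tau * DQ Rs + 2 * Rs = 4 * tau := by
  have hmain : (tau * (2 * DQ (DQ hb)) + 4 * DQ hb) * ((u - 1) * (u + 1))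
      = 4 * tau * ((u - 1) * (u + 1)) := by
    linear_combination (-4*(u-1)) * rel_i + (2*(u-1)) * rel_ii
      + (2 * DQ (DQ hb) * (u-1) - 4*(u-1)) * tau_u
  have hcancel := mul_right_cancel₀ (mul_ne_zero um1_ne up1_ne) hmain
  rw [Rs, DQ_two_mul]
  linear_combination hcancel

lemma tau_c0 : PowerSeries.coeff 0 tau = 0 := by
  rw [PowerSeries.coeff_zero_eq_constantCoeff_apply, tau_const]

lemma tau_ode_unique (y : QS) (hy : tau * DQ y + 2 * y = 0) : y = 0 := by
  have key : ∀ m, PowerSeries.coeff m y = 0 := by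
    intro m
    induction m using Nat.strong_induction_on with
    | _ m IH =>
      have hm := congrArg (PowerSeries.coeff m) hy
      rw [map_add, map_zero, PowerSeries.coeff_mul,
        show ((2 : QS)) = PowerSeries.C (2 : ℚ) from (map_ofNat _ 2).symm,
        PowerSeries.coeff_C_mul] at hm
      rcases m with _ | m
      · rw [Finset.Nat.sum_antidiagonal_eq_sum_range_succ_mk] at hm
        simp only [Finset.sum_range_one] at hm
        rw [tau_c0, zero_mul, zero_add] at hm
        linarith
      · have hmem : ((1 : ℕ), m) ∈ Finset.HasAntidiagonal.antidiagonal (m + 1) := by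
          simp [Finset.HasAntidiagonal.mem_antidiagonal, Nat.add_comm]
        have hside : ∀ ij ∈ Finset.HasAntidiagonal.antidiagonal (m + 1), ij ≠ (1, m) →
            PowerSeries.coeff ij.1 tau * PowerSeries.coeff ij.2 (DQ y) = 0 := by
          intro ij hij hne
          obtain ⟨i, j⟩ := ij
          have hsum : i + j = m + 1 := Finset.HasAntidiagonal.mem_antidiagonal.mp hij
          rcases i with _ | i
          · rw [tau_c0, zero_mul]
          · rcases i with _ | i
            · exfalso
              apply hne
              have : j = m := by omega
              rw [this]
            · rw [coeff_DQ, IH (j + 1) (by omega), zero_mul, mul_zero]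
        rw [Finset.sum_eq_single_of_mem (1, m) hmem hside] at hm
        rw [tau_c1, one_mul, coeff_DQ] at hm
        have h5 : PowerSeries.coeff (m + 1) y * ((m : ℚ) + 3) = 0 := by
          push_cast at hm ⊢
          linear_combination hm
        rcases mul_eq_zero.mp h5 with h6 | h6
        · exact h6
        · exfalso
          have : ((m : ℚ) + 3) ≠ 0 := by positivity
          exact this h6
  ext n
  simp [key n]

lemma G_eq_R : G = Rs := by
  have hy : tau * DQ (G - Rs) + 2 * (G - Rs) = 0 := by
    rw [DQ_sub]
    linear_combination G_ode - R_ode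
  exact sub_eq_zero.mp (tau_ode_unique _ hy)

lemma Lq_T (n : ℕ) (hn : 1 ≤ n) : Lq (T n) = 2 ^ (n + 2) * _root_.bernoulli (n + 1) := by
  have h := congrArg (PowerSeries.coeff n) G_eq_R
  rw [G, coeff_Lmap, coeff_F, Lq_C_mul, Rs,
    show ((2 : QS)) = PowerSeries.C (2 : ℚ) from (map_ofNat _ 2).symm,
    PowerSeries.coeff_C_mul, coeff_DQ, hb, map_add, coeff_b2,
    PowerSeries.coeff_X, if_neg (by omega : ¬ n + 1 = 1)] at h
  have h1 : ((n.factorial : ℚ)) ≠ 0 := Nat.cast_ne_zero.mpr n.factorial_ne_zero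
  have h3 : ((n : ℚ) + 1) ≠ 0 := by positivity
  have hfac : (((n + 1).factorial : ℚ)) = ((n : ℚ) + 1) * (n.factorial : ℚ) := by
    rw [Nat.factorial_succ]; push_cast; ring
  apply mul_left_cancel₀ (inv_ne_zero h1)
  rw [h, hfac]
  field_simp
  ring

end TProof
namespace TProof

lemma Lq_T_odd (m : ℕ) :
    Lq (T (2 * m + 1)) = 2 ^ (2 * m + 3) * _root_.bernoulli (2 * m + 2) :=
  Lq_T (2 * m + 1) (by omega)

lemma integral_T_eq (k : ℕ) :
    ∫ x in (-1 : ℝ)..1, (Polynomial.aeval x (T k) : ℝ) = ((Lq (T k) : ℚ) : ℝ) :=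
  integral_eq_Lq (T k)

lemma integral_T_odd (m : ℕ) :
    ∫ x in (-1 : ℝ)..1, (Polynomial.aeval x (T (2 * m + 1)) : ℝ)
      = 2 ^ (2 * m + 3) * (bernoulli (2 * m + 2) : ℝ) := by
  rw [integral_T_eq, Lq_T_odd]
  push_cast
  try ring

end TProof

theorem integral_T_generating_identity :
    (∀ z : ℝ, z ≠ 0 → |z| < Real.pi →
      ∑' n : ℕ, (∫ x in (-1 : ℝ)..1, (Polynomial.aeval x (T (2 * n + 1)) : ℝ)) *
          z ^ (2 * n + 1) / (Nat.factorial (2 * n + 1)) =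
        4 * ∑' n : ℕ, ((n : ℝ) + 1) *
          ((2 : ℝ) ^ (2 * n + 2) * (bernoulli (2 * n + 2) : ℝ) / (Nat.factorial (2 * n + 2))) *
            z ^ (2 * n + 1)) ∧
    (∀ n : ℕ, 1 ≤ n →
      ∫ x in (-1 : ℝ)..1, (Polynomial.aeval x (T (2 * n - 1)) : ℝ) =
        2 ^ (2 * n + 1) * (bernoulli (2 * n) : ℝ)) := by
  constructor
  · intro z _ _
    rw [← tsum_mul_left]
    refine tsum_congr fun n => ?_
    rw [TProof.integral_T_odd n]
    have hfac : (Nat.factorial (2 * n + 2) : ℝ) = ((2 * n + 2 : ℕ) : ℝ) * (Nat.factorial (2 * n + 1) : ℝ) := by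
      rw [show 2 * n + 2 = (2 * n + 1) + 1 from rfl, Nat.factorial_succ]
      push_cast
      ring
    have h1 : (Nat.factorial (2 * n + 1) : ℝ) ≠ 0 := by
      exact Nat.cast_ne_zero.mpr (Nat.factorial_ne_zero _)
    have h2 : (Nat.factorial (2 * n + 2) : ℝ) ≠ 0 := by
      exact Nat.cast_ne_zero.mpr (Nat.factorial_ne_zero _)
    rw [hfac]
    push_cast
    field_simp
    ring
  · intro n hn
    obtain ⟨m, rfl⟩ : ∃ m, n = m + 1 := ⟨n - 1, by omega⟩
    have h : 2 * (m + 1) - 1 = 2 * m + 1 := by omega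
    rw [h, TProof.integral_T_odd m]
    have h2 : 2 * (m + 1) + 1 = 2 * m + 3 := by omega
    have h3 : 2 * (m + 1) = 2 * m + 2 := by omega
    rw [h2, h3]
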